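/- Let p ∈ Ω with X(p) ≠ 0, let σ ∈ (0, 1/2), and suppose X is differentiable at p and v ∈ E satisfies the Newton equation X(p) + DX(p) v = 0. Then there exists j ∈ ℕ such that φ(p + 2^{−j} v) ≤ φ(p) − σ 2^{−j} ‖X(p)‖²; consequently the Armijo backtracking stepsize of the damped Newton method is well defined at p. -/

import Mathlib

/-- If `X p ≠ 0`, `σ ∈ (0, 1/2)`, `X` is differentiable at `p` and `v`
solves the Newton equation `X p + DX p v = 0`, then some stepsize `2⁻ʲ` satisfies the
Armijo condition `φ(p + 2⁻ʲ v) ≤ φ(p) - σ 2⁻ʲ ‖X p‖²` (with `φ(q) = ½‖X q‖²`), so the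
Armijo backtracking stepsize of the damped Newton method is well defined at `p`. -/
theorem armijo_stepsize_well_defined {E : Type*} [NormedAddCommGroup E]
    [InnerProductSpace ℝ E] [FiniteDimensional ℝ E]
    (Ω : Set E) (hΩ : IsOpen Ω) (X : E → E) (DX : E → (E →L[ℝ] E))
    (p : E) (hp : p ∈ Ω) (hXp : X p ≠ 0)
    (σ : ℝ) (hσ0 : 0 < σ) (hσ1 : σ < 1 / 2)
    (hdiff : HasFDerivAt X (DX p) p)
    (v : E) (hv : X p + DX p v = 0) :
    ∃ j : ℕ, (1 / 2 : ℝ) * ‖X (p + ((1 / 2 : ℝ) ^ j) • v)‖ ^ 2 ≤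
      (1 / 2 : ℝ) * ‖X p‖ ^ 2 - σ * (1 / 2 : ℝ) ^ j * ‖X p‖ ^ 2 := by
  have hvv : DX p v = -X p := by linear_combination (norm := abel) hv
  -- the curve t ↦ X (p + t • v)
  have hline : HasDerivAt (fun t : ℝ => p + t • v) v 0 := by
    simpa using ((hasDerivAt_id (0:ℝ)).smul_const v).const_add p
  have hX : HasDerivAt (fun t : ℝ => X (p + t • v)) (DX p v) 0 := by
    have : HasFDerivAt X (DX p) (p + (0:ℝ) • v) := by simpa using hdiff
    exact this.comp_hasDerivAt 0 hline
  have hg : HasDerivAt (fun t : ℝ => ‖X (p + t • v)‖ ^ 2) (-(2 * ‖X p‖ ^ 2)) 0 := by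
    have := hX.norm_sq
    simp only [zero_smul, add_zero, hvv] at this
    have h2 : (2 : ℝ) * (Inner.inner ℝ (X p) (-X p) : ℝ) = -(2 * ‖X p‖ ^ 2) := by
      rw [inner_neg_right, real_inner_self_eq_norm_sq]; ring
    rwa [h2] at this
  -- slope tends to derivative
  have hslope := hg.hasDerivWithinAt (s := Set.Ioi 0)
  rw [hasDerivWithinAt_iff_tendsto_slope] at hslope
  have hXp2 : 0 < ‖X p‖ ^ 2 := by
    have := norm_pos_iff.mpr hXp; positivity
  have hlt : -(2 * ‖X p‖ ^ 2) < -(2 * σ) * ‖X p‖ ^ 2 := by nlinarith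
  have hev : ∀ᶠ t in nhdsWithin (0:ℝ) (Set.Ioi 0 \ {0}),
      slope (fun t : ℝ => ‖X (p + t • v)‖ ^ 2) 0 t < -(2 * σ) * ‖X p‖ ^ 2 :=
    hslope.eventually_lt_const hlt
  -- the sequence (1/2)^j tends to 0 within Ioi 0 \ {0}
  have hpow : ∀ j : ℕ, (0:ℝ) < (1/2:ℝ) ^ j := fun j => by positivity
  have hseq : Filter.Tendsto (fun j : ℕ => (1/2:ℝ) ^ j) Filter.atTop
      (nhdsWithin (0:ℝ) (Set.Ioi 0 \ {0})) := by
    apply tendsto_nhdsWithin_of_tendsto_nhds_of_eventually_within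
    · exact tendsto_pow_atTop_nhds_zero_of_lt_one (by norm_num) (by norm_num)
    · exact Filter.Eventually.of_forall fun j => ⟨hpow j, (hpow j).ne'⟩
  obtain ⟨j, hj⟩ := (hseq.eventually hev).exists
  refine ⟨j, ?_⟩
  rw [slope_def_field] at hj
  have ht := hpow j
  rw [sub_zero, div_lt_iff₀ ht] at hj
  simp only [zero_smul, add_zero] at hj
  nlinarith [hj]
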